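/- Every simplex (i.e., every finite affinely independent set of points in a Euclidean space ℝ^d) embeds isometrically into some regular polygonal torus; that is, for every finite affinely independent set Y ⊂ ℝ^d there exist n ∈ ℕ, regular polygons T_1, …, T_n ⊂ ℝ² and a map f : Y → T_1 × ⋯ × T_n ⊆ ℝ^{2n} such that ‖f(y) − f(y')‖ = ‖y − y'‖ for all y, y' ∈ Y. -/

import Mathlib

open scoped Classical

noncomputable section

/-- The `j`-th vertex of a regular `m`-gon in the Euclidean plane with center `c`,
circumradius `r` and angle `θ`. -/
def polygonVertex (c : EuclideanSpace ℝ (Fin 2)) (r θ : ℝ) (m j : ℕ) :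
    EuclideanSpace ℝ (Fin 2) :=
  (WithLp.equiv 2 (Fin 2 → ℝ)).symm
    ![c 0 + r * Real.cos (2 * Real.pi * j / m + θ),
      c 1 + r * Real.sin (2 * Real.pi * j / m + θ)]

/-- `T` is (the vertex set of) a regular `m`-gon of circumradius `r` in the plane. -/
def IsRegularPolygon (m : ℕ) (r : ℝ) (T : Set (EuclideanSpace ℝ (Fin 2))) : Prop :=
  2 ≤ m ∧ 0 < r ∧
    ∃ (c : EuclideanSpace ℝ (Fin 2)) (θ : ℝ),
      T = {p | ∃ j < m, p = polygonVertex c r θ m j}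

/-- The Cartesian product of `n` planar sets, viewed inside `ℝ^{2n}`. -/
def toriProduct {n : ℕ} (T : Fin n → Set (EuclideanSpace ℝ (Fin 2))) :
    Set (EuclideanSpace ℝ (Fin n × Fin 2)) :=
  {x | ∀ i : Fin n, ((WithLp.equiv 2 (Fin 2 → ℝ)).symm fun j => x (i, j)) ∈ T i}

set_option maxHeartbeats 1600000

open Real Finset


lemma sum_zero_quadform {F : Type*} [NormedAddCommGroup F] [InnerProductSpace ℝ F]
    {ι : Type*} [Fintype ι] (p : ι → F) (w : ι → ℝ) (hw : ∑ a, w a = 0) :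
    ∑ a, ∑ b, w a * w b * dist (p a) (p b)^2 = -2 * ‖∑ a, w a • p a‖^2 := by
  have hd : ∀ a b : ι, dist (p a) (p b)^2
      = ‖p a‖^2 - 2 * inner ℝ (p a) (p b) + ‖p b‖^2 := by
    intro a b
    rw [dist_eq_norm, @norm_sub_sq_real]
  have h1 : ‖∑ a, w a • p a‖^2 = ∑ a, ∑ b, w a * w b * inner ℝ (p a) (p b) := by
    rw [← real_inner_self_eq_norm_sq, sum_inner]
    refine Finset.sum_congr rfl fun a _ => ?_
    rw [real_inner_smul_left, inner_sum, Finset.mul_sum]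
    refine Finset.sum_congr rfl fun b _ => ?_
    rw [real_inner_smul_right]; ring
  have e1 : ∑ a, ∑ b, w a * w b * ‖p a‖^2 = 0 := by
    have : ∀ a, ∑ b, w a * w b * ‖p a‖^2 = (w a * ‖p a‖^2) * ∑ b, w b := by
      intro a; rw [Finset.mul_sum]; exact Finset.sum_congr rfl fun b _ => by ring
    simp [this, hw]
  have e2 : ∑ a, ∑ b, w a * w b * ‖p b‖^2 = 0 := by
    rw [Finset.sum_comm]
    have : ∀ b, ∑ a, w a * w b * ‖p b‖^2 = (w b * ‖p b‖^2) * ∑ a, w a := by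
      intro b; rw [Finset.mul_sum]; exact Finset.sum_congr rfl fun a _ => by ring
    simp [this, hw]
  calc ∑ a, ∑ b, w a * w b * dist (p a) (p b)^2
      = ∑ a, ∑ b, (w a * w b * ‖p a‖^2 + w a * w b * ‖p b‖^2
          - 2 * (w a * w b * inner ℝ (p a) (p b))) := by
        refine Finset.sum_congr rfl fun a _ => Finset.sum_congr rfl fun b _ => ?_
        rw [hd]; ring
    _ = (∑ a, ∑ b, w a * w b * ‖p a‖^2) + (∑ a, ∑ b, w a * w b * ‖p b‖^2)
          - 2 * ∑ a, ∑ b, w a * w b * inner ℝ (p a) (p b) := by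
        simp [Finset.sum_add_distrib, Finset.sum_sub_distrib, Finset.mul_sum]
    _ = -2 * ‖∑ a, w a • p a‖^2 := by rw [e1, e2, h1]; ring


lemma exists_sq_decomp {ι : Type*} [Fintype ι] [DecidableEq ι] [Nonempty ι]
    (D : ι → ι → ℝ) (hsym : ∀ a b, D a b = D b a) (hdiag : ∀ a, D a a = 0)
    (hneg : ∀ w : ι → ℝ, ∑ a, w a = 0 → 0 ≤ -∑ a, ∑ b, w a * w b * D a b) :
    ∃ q : ι → ι → ℝ, ∀ a b, ∑ c, (q a c - q b c)^2 = D a b := by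
  obtain ⟨o⟩ := ‹Nonempty ι›
  set G : Matrix ι ι ℝ := Matrix.of fun a b => (D o a + D o b - D a b)/2 with hG
  have hGapp : ∀ a b, G a b = (D o a + D o b - D a b)/2 := fun a b => rfl
  have hpsd : G.PosSemidef := by
    refine Matrix.PosSemidef.of_dotProduct_mulVec_nonneg ?_ ?_
    · ext a b
      simp only [Matrix.conjTranspose_apply, star_trivial, hGapp]
      rw [hsym a b]; ring
    · intro x
      set s := ∑ a, x a with hs
      set w : ι → ℝ := fun a => x a - (if a = o then s else 0) with hw
      have hws : ∑ a, w a = 0 := by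
        simp [hw, Finset.sum_sub_distrib, Finset.sum_ite_eq', hs]
      have key : dotProduct (star x) (G.mulVec x) = -(1/2) * ∑ a, ∑ b, w a * w b * D a b := by
        have expand : ∀ a b, w a * w b * D a b
            = x a * x b * D a b - x a * (if b = o then s else 0) * D a b
              - (if a = o then s else 0) * x b * D a b
              + (if a = o then s else 0) * (if b = o then s else 0) * D a b := by
          intro a b; simp only [hw]; ring
        have sum1 : ∀ a, ∑ b, x a * (if b = o then s else 0) * D a b = x a * s * D a o := by
          intro a
          rw [Finset.sum_eq_single o]
          · simp
          · intro b _ hb; simp [hb]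
          · intro h; simp at h
        have sum2 : ∑ a, ∑ b, (if a = o then s else 0) * x b * D a b
            = ∑ b, s * x b * D o b := by
          rw [Finset.sum_eq_single o]
          · simp
          · intro a _ ha; simp [ha]
          · intro h; simp at h
        have sum3 : ∑ a, ∑ b, (if a = o then s else 0) * (if b = o then s else 0) * D a b
            = 0 := by
          rw [Finset.sum_eq_single o]
          · rw [Finset.sum_eq_single o]
            · simp [hdiag]
            · intro b _ hb; simp [hb]
            · intro h; simp at h
          · intro a _ ha; simp [ha]
          · intro h; simp at h
        have lhs : dotProduct (star x) (G.mulVec x)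
            = ∑ a, ∑ b, x a * x b * ((D o a + D o b - D a b)/2) := by
          simp only [dotProduct, Matrix.mulVec, dotProduct, star_trivial,
            Pi.star_apply, Finset.mul_sum]
          refine Finset.sum_congr rfl fun a _ => Finset.sum_congr rfl fun b _ => ?_
          rw [hGapp]; ring
        have rhs : ∑ a, ∑ b, w a * w b * D a b
            = (∑ a, ∑ b, x a * x b * D a b) - 2 * s * ∑ a, x a * D o a := by
          simp only [expand, Finset.sum_add_distrib, Finset.sum_sub_distrib, sum1, sum2, sum3]
          have : ∑ a, x a * s * D a o = ∑ a, x a * D o a * s := by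
            refine Finset.sum_congr rfl fun a _ => ?_
            rw [hsym a o]; ring
          rw [this]
          have : ∑ b, s * x b * D o b = s * ∑ b, x b * D o b := by
            rw [Finset.mul_sum]; exact Finset.sum_congr rfl fun b _ => by ring
          rw [this]
          rw [← Finset.sum_mul]
          ring
        rw [lhs, rhs]
        have f1 : ∑ a, ∑ b, x a * x b * D o a = (∑ a, x a * D o a) * s := by
          rw [Finset.sum_mul]
          refine Finset.sum_congr rfl fun a _ => ?_
          rw [Finset.mul_sum]
          refine Finset.sum_congr rfl fun b _ => by ring
        have f2 : ∑ a, ∑ b, x a * x b * D o b = s * ∑ b, x b * D o b := by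
          rw [Finset.sum_comm, Finset.mul_sum]
          refine Finset.sum_congr rfl fun b _ => ?_
          rw [hs, Finset.sum_mul]
          refine Finset.sum_congr rfl fun a _ => by ring
        have exp2 : ∑ a, ∑ b, x a * x b * ((D o a + D o b - D a b)/2)
            = (∑ a, ∑ b, x a * x b * D o a)/2 + (∑ a, ∑ b, x a * x b * D o b)/2
              - (∑ a, ∑ b, x a * x b * D a b)/2 := by
          have : ∀ a b : ι, x a * x b * ((D o a + D o b - D a b)/2)
              = (x a * x b * D o a)/2 + (x a * x b * D o b)/2 - (x a * x b * D a b)/2 := by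
            intro a b; ring
          simp only [this, Finset.sum_add_distrib, Finset.sum_sub_distrib, ← Finset.sum_div]
        rw [exp2, f1, f2]
        ring
      rw [key]
      have := hneg w hws
      linarith
  obtain ⟨B, hB⟩ : ∃ B : Matrix ι ι ℝ, G = star B * B := by
    open scoped MatrixOrder in exact CStarAlgebra.nonneg_iff_eq_star_mul_self.mp hpsd.nonneg
  refine ⟨fun a c => B c a, fun a b => ?_⟩
  have hGe : ∀ a b, G a b = ∑ c, B c a * B c b := by
    intro a b
    rw [hB]
    simp [Matrix.mul_apply, Matrix.star_eq_conjTranspose, Matrix.conjTranspose_apply]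
  have : ∑ c, (B c a - B c b)^2
      = (∑ c, B c a * B c a) + (∑ c, B c b * B c b) - 2 * ∑ c, B c a * B c b := by
    rw [Finset.mul_sum, ← Finset.sum_add_distrib, ← Finset.sum_sub_distrib]
    refine Finset.sum_congr rfl fun c _ => by ring
  rw [this, ← hGe, ← hGe, ← hGe, hGapp, hGapp, hGapp, hdiag a, hdiag b]
  ring


lemma exists_coercive {ι : Type*} [Fintype ι] [DecidableEq ι] {d : ℕ}
    (p : ι → EuclideanSpace ℝ (Fin d))
    (hp : ∀ w : ι → ℝ, ∑ a, w a = 0 → ∑ a, w a • p a = 0 → w = 0) :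
    ∃ lam : ℝ, 0 < lam ∧
      ∀ w : ι → ℝ, ∑ a, w a = 0 → lam * ∑ a, (w a)^2 ≤ ‖∑ a, w a • p a‖^2 := by
  cases isEmpty_or_nonempty ι with
  | inl h =>
    exact ⟨1, one_pos, fun w hw => by simp⟩
  | inr h =>
    classical
    let φ : (ι → ℝ) →ₗ[ℝ] ℝ :=
      { toFun := fun w => ∑ a, w a
        map_add' := fun u v => by simp [Finset.sum_add_distrib]
        map_smul' := fun c u => by simp [Finset.mul_sum] }
    let L : (ι → ℝ) →ₗ[ℝ] EuclideanSpace ℝ (Fin d) :=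
      { toFun := fun w => ∑ a, w a • p a
        map_add' := fun u v => by
          simp [add_smul, Finset.sum_add_distrib]
        map_smul' := fun c u => by
          simp [smul_smul, Finset.smul_sum] }
    set V : Submodule ℝ (ι → ℝ) := LinearMap.ker φ with hV
    let L' : V →ₗ[ℝ] EuclideanSpace ℝ (Fin d) := L.domRestrict V
    have hinj : Function.Injective L' := by
      rw [← LinearMap.ker_eq_bot, LinearMap.ker_eq_bot']
      intro v hv
      have := hp v.1 v.2 hv
      exact Subtype.ext this
    let e : V ≃ₗ[ℝ] LinearMap.range L' := LinearEquiv.ofInjective L' hinj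
    let ce := e.toContinuousLinearEquiv
    set C : ℝ := ‖(ce.symm : LinearMap.range L' →L[ℝ] V)‖ with hC
    have hle : ∀ v : V, ‖v‖ ≤ C * ‖L' v‖ := by
      intro v
      have h1 : ce.symm (ce v) = v := ce.symm_apply_apply v
      have h2 : ‖ce.symm (ce v)‖ ≤ C * ‖ce v‖ :=
        (ce.symm : LinearMap.range L' →L[ℝ] V).le_opNorm (ce v)
      rw [h1] at h2
      have h3 : ‖ce v‖ = ‖L' v‖ := rfl
      rw [h3] at h2
      exact h2
    set C' : ℝ := max C 1 with hC'
    have hC'pos : 0 < C' := lt_of_lt_of_le one_pos (le_max_right _ _)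
    have hle' : ∀ v : V, ‖(v : ι → ℝ)‖ ≤ C' * ‖L' v‖ := by
      intro v
      calc ‖(v : ι → ℝ)‖ = ‖v‖ := rfl
        _ ≤ C * ‖L' v‖ := hle v
        _ ≤ C' * ‖L' v‖ := by
            apply mul_le_mul_of_nonneg_right (le_max_left _ _) (norm_nonneg _)
    set N : ℕ := Fintype.card ι with hN
    have hNpos : 0 < (N : ℝ) := by
      have := Fintype.card_pos (α := ι)
      exact_mod_cast this
    refine ⟨1 / (N * C'^2), by positivity, fun w hw => ?_⟩
    have hwV : w ∈ V := by
      simp only [hV, LinearMap.mem_ker]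
      exact hw
    set v : V := ⟨w, hwV⟩ with hv
    have hb : ‖w‖ ≤ C' * ‖∑ a, w a • p a‖ := hle' v
    have hsq : ∑ a, (w a)^2 ≤ N * ‖w‖^2 := by
      have : ∀ a : ι, (w a)^2 ≤ ‖w‖^2 := by
        intro a
        have h1 : |w a| ≤ ‖w‖ := by
          have := norm_le_pi_norm w a
          simpa using this
        calc (w a)^2 = |w a|^2 := (sq_abs _).symm
          _ ≤ ‖w‖^2 := pow_le_pow_left₀ (abs_nonneg _) h1 2
      calc ∑ a, (w a)^2 ≤ ∑ _a : ι, ‖w‖^2 := Finset.sum_le_sum fun a _ => this a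
        _ = N * ‖w‖^2 := by simp [hN, mul_comm]
    have hb2 : ‖w‖^2 ≤ C'^2 * ‖∑ a, w a • p a‖^2 := by
      have := mul_self_le_mul_self (norm_nonneg w) hb
      calc ‖w‖^2 = ‖w‖ * ‖w‖ := sq ‖w‖ ▸ by ring
        _ ≤ (C' * ‖∑ a, w a • p a‖) * (C' * ‖∑ a, w a • p a‖) := this
        _ = C'^2 * ‖∑ a, w a • p a‖^2 := by ring
    rw [div_mul_eq_mul_div, one_mul, div_le_iff₀ (by positivity)]
    calc ∑ a, (w a)^2 ≤ N * ‖w‖^2 := hsq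
      _ ≤ N * (C'^2 * ‖∑ a, w a • p a‖^2) := by
          apply mul_le_mul_of_nonneg_left hb2 (le_of_lt hNpos)
      _ = ‖∑ a, w a • p a‖^2 * (N * C'^2) := by ring

lemma plane_sq (r α β : ℝ) :
    (r*Real.cos α - r*Real.cos β)^2 + (r*Real.sin α - r*Real.sin β)^2
      = 2*r^2*(1 - Real.cos (α - β)) := by
  rw [Real.cos_sub]
  nlinarith [Real.sin_sq_add_cos_sq α, Real.sin_sq_add_cos_sq β]


lemma two_gon_val (r : ℝ) (j k : ℕ) (hj : j ≤ 1) (hk : k ≤ 1) :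
    2*r^2*(1 - Real.cos (2*Real.pi*j/2 - 2*Real.pi*k/2)) = if j = k then 0 else 4*r^2 := by
  interval_cases j <;> interval_cases k <;> simp <;> ring

lemma cos_mod_arg (z w : ℤ) (m : ℕ) (hm : 0 < m) :
    Real.cos (2*Real.pi*(((z % (m:ℤ)).toNat : ℕ) : ℝ)/m - 2*Real.pi*(((w % (m:ℤ)).toNat : ℕ) : ℝ)/m)
      = Real.cos (2*Real.pi*((z - w : ℤ) : ℝ)/m) := by
  have hm0 : ((m:ℤ)) ≠ 0 := by exact_mod_cast hm.ne'
  have hmR : (m:ℝ) ≠ 0 := by exact_mod_cast hm.ne'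
  have h1 : (((z % (m:ℤ)).toNat : ℕ) : ℝ) = ((z % (m:ℤ) : ℤ) : ℝ) := by
    have := Int.toNat_of_nonneg (Int.emod_nonneg z hm0)
    exact_mod_cast congrArg (fun t : ℤ => (t : ℝ)) this
  have h2 : (((w % (m:ℤ)).toNat : ℕ) : ℝ) = ((w % (m:ℤ) : ℤ) : ℝ) := by
    have := Int.toNat_of_nonneg (Int.emod_nonneg w hm0)
    exact_mod_cast congrArg (fun t : ℤ => (t : ℝ)) this
  rw [h1, h2]
  have ez : ((z % (m:ℤ) : ℤ) : ℝ) = (z:ℝ) - (m:ℝ) * ((z / (m:ℤ) : ℤ) : ℝ) := by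
    rw [Int.emod_def]; push_cast; ring
  have ew : ((w % (m:ℤ) : ℤ) : ℝ) = (w:ℝ) - (m:ℝ) * ((w / (m:ℤ) : ℤ) : ℝ) := by
    rw [Int.emod_def]; push_cast; ring
  rw [ez, ew]
  have : 2*Real.pi*((z:ℝ) - (m:ℝ) * ((z / (m:ℤ) : ℤ) : ℝ))/m
        - 2*Real.pi*((w:ℝ) - (m:ℝ) * ((w / (m:ℤ) : ℤ) : ℝ))/m
      = 2*Real.pi*((z - w : ℤ) : ℝ)/m + ((w / (m:ℤ) - z / (m:ℤ) : ℤ) : ℝ) * (2*Real.pi) := by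
    push_cast
    field_simp
    ring
  rw [this, Real.cos_add_int_mul_two_pi]

lemma polygon_sq_approx (M m : ℕ) (hM : 1 ≤ M) (Δ : ℤ) (u B : ℝ) (hB : 1 ≤ B)
    (hΔu : |(Δ:ℝ) - M * u| ≤ 1) (hu : |u| ≤ B) (hm2 : 8 * Real.pi * M * B ≤ m) :
    |((m:ℝ)^2/(2*Real.pi^2*M^2)) * (1 - Real.cos (2*Real.pi*(Δ:ℝ)/m)) - u^2|
      ≤ 3*B/M + 128 * Real.pi^2 * M^2 * B^4 / m^2 := by
  have hπ := Real.pi_gt_three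
  have hMR : (1:ℝ) ≤ M := by exact_mod_cast hM
  have hMpos : (0:ℝ) < M := by linarith
  have hMB : (1:ℝ) ≤ M*B := by
    nlinarith [mul_nonneg (sub_nonneg.2 hMR) (sub_nonneg.2 hB)]
  have hmR : (24:ℝ) ≤ m := by
    nlinarith [mul_le_mul_of_nonneg_left hMB (by positivity : (0:ℝ) ≤ 8*Real.pi)]
  have hmpos : (0:ℝ) < m := by linarith
  have hΔ : |(Δ:ℝ)| ≤ 2 * M * B := by
    have h1 : |(Δ:ℝ)| ≤ |((Δ:ℝ) - M * u)| + |(M:ℝ) * u| := by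
      have := abs_add_le ((Δ:ℝ) - M * u) ((M:ℝ) * u)
      simpa using this
    have h2 : |(M:ℝ) * u| = M * |u| := by
      rw [abs_mul, abs_of_pos hMpos]
    nlinarith
  set θ : ℝ := 2*Real.pi*(Δ:ℝ)/m with hθ
  have habs : |θ| = 2*Real.pi*|(Δ:ℝ)|/m := by
    rw [hθ, abs_div, abs_of_pos hmpos, abs_mul,
      abs_of_pos (by positivity : (0:ℝ) < 2*Real.pi)]
  have hθ1 : |θ| ≤ 1/2 := by
    rw [habs, div_le_iff₀ hmpos]
    nlinarith [mul_le_mul_of_nonneg_left hΔ (by positivity : (0:ℝ) ≤ 2*Real.pi)]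
  have hcb := Real.cos_bound (le_trans hθ1 (by norm_num))
  set s : ℝ := (m:ℝ)^2/(2*Real.pi^2*M^2) with hs
  have hspos : 0 < s := by positivity
  have hkey1 : |s * (1 - Real.cos θ) - ((Δ:ℝ)/M)^2| ≤ s * θ^4 := by
    have hsθ : s * (θ^2/2) = ((Δ:ℝ)/M)^2 := by
      rw [hs, hθ]; field_simp
    have hrw : s * (1 - Real.cos θ) - ((Δ:ℝ)/M)^2 = s * ((1 - θ^2/2) - Real.cos θ) := by
      rw [← hsθ]; ring
    rw [hrw, abs_mul, abs_of_pos hspos]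
    apply mul_le_mul_of_nonneg_left _ hspos.le
    calc |(1 - θ^2/2) - Real.cos θ| = |Real.cos θ - (1 - θ^2/2)| := abs_sub_comm _ _
      _ ≤ |θ|^4 * (5/96) := hcb
      _ ≤ θ^4 := by
          have h4 : |θ|^4 = θ^4 := by
            rw [pow_abs, abs_of_nonneg (by positivity : (0:ℝ) ≤ θ^4)]
          nlinarith [pow_nonneg (abs_nonneg θ) 4]
  have heq : s * θ^4 = 8*Real.pi^2*((Δ:ℝ))^4/(M^2*m^2) := by
    rw [hs, hθ]; field_simp; ring
  have hΔ2 : (Δ:ℝ)^2 ≤ 4*M^2*B^2 := by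
    nlinarith [sq_abs (Δ:ℝ), abs_nonneg (Δ:ℝ)]
  have hΔ4 : (Δ:ℝ)^4 ≤ 16*M^4*B^4 := by
    calc (Δ:ℝ)^4 = ((Δ:ℝ)^2)^2 := by ring
      _ ≤ (4*(M:ℝ)^2*B^2)^2 := pow_le_pow_left₀ (sq_nonneg _) hΔ2 2
      _ = 16*(M:ℝ)^4*B^4 := by ring
  have hsθ4 : s * θ^4 ≤ 128*Real.pi^2*M^2*B^4/m^2 := by
    calc s * θ^4 = 8*Real.pi^2*((Δ:ℝ))^4/(M^2*m^2) := heq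
      _ ≤ 8*Real.pi^2*(16*M^4*B^4)/(M^2*m^2) := by gcongr
      _ = 128*Real.pi^2*M^2*B^4/m^2 := by field_simp; ring
  have h5 : |(Δ:ℝ)/M - u| ≤ 1/M := by
    have hrw : (Δ:ℝ)/M - u = ((Δ:ℝ) - M*u)/M := by field_simp
    rw [hrw, abs_div, abs_of_pos hMpos]
    gcongr
  have h6 : |(Δ:ℝ)/M| ≤ 2*B := by
    rw [abs_div, abs_of_pos hMpos, div_le_iff₀ hMpos]
    nlinarith
  have h7 : |((Δ:ℝ)/M)^2 - u^2| ≤ 3*B/M := by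
    have hrw : ((Δ:ℝ)/M)^2 - u^2 = ((Δ:ℝ)/M - u) * ((Δ:ℝ)/M + u) := by ring
    rw [hrw, abs_mul]
    have h8 : |(Δ:ℝ)/M + u| ≤ 3*B := by
      calc |(Δ:ℝ)/M + u| ≤ |(Δ:ℝ)/M| + |u| := abs_add_le _ _
        _ ≤ 3*B := by linarith
    calc |(Δ:ℝ)/M - u| * |(Δ:ℝ)/M + u| ≤ (1/M) * (3*B) :=
        mul_le_mul h5 h8 (abs_nonneg _) (by positivity)
      _ = 3*B/M := by ring
  calc |s * (1 - Real.cos θ) - u^2|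
      ≤ |s * (1 - Real.cos θ) - ((Δ:ℝ)/M)^2| + |((Δ:ℝ)/M)^2 - u^2| := abs_sub_le _ _ _
    _ ≤ 3*B/M + 128*Real.pi^2*M^2*B^4/m^2 := by linarith

lemma key {ι : Type*} [Fintype ι] [DecidableEq ι] {d : ℕ}
    (p : ι → EuclideanSpace ℝ (Fin d))
    (hp : ∀ w : ι → ℝ, ∑ a, w a = 0 → ∑ a, w a • p a = 0 → w = 0) :
    ∃ (n : ℕ) (m : Fin n → ℕ) (r : Fin n → ℝ) (x : Fin n → ι → ℕ),
      (∀ i, 2 ≤ m i) ∧ (∀ i, 0 < r i) ∧ (∀ i a, x i a < m i) ∧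
      ∀ a b, dist (p a) (p b)^2
        = ∑ i, 2 * (r i)^2
            * (1 - Real.cos (2*Real.pi*(x i a)/(m i) - 2*Real.pi*(x i b)/(m i))) := by
  by_cases hsub : ∀ a b : ι, a = b
  · refine ⟨0, Fin.elim0, Fin.elim0, Fin.elim0, fun i => i.elim0, fun i => i.elim0,
      fun i => i.elim0, fun a b => ?_⟩
    rw [hsub a b]
    simp
  · push_neg at hsub
    obtain ⟨a0, b0, hab0⟩ := hsub
    haveI : Nonempty ι := ⟨a0⟩
    haveI : Nontrivial ι := ⟨a0, b0, hab0⟩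
    set N : ℕ := Fintype.card ι with hNdef
    have hN2 : 2 ≤ N := Fintype.one_lt_card
    have hNR : (2:ℝ) ≤ N := by exact_mod_cast hN2
    have hNpos : (0:ℝ) < N := by linarith
    have hπ := Real.pi_gt_three
    obtain ⟨lam, hlam, hco⟩ := exists_coercive p hp
    set D : ι → ι → ℝ := fun a b => dist (p a) (p b)^2 with hD
    set D' : ι → ι → ℝ := fun a b => D a b - lam * (if a = b then 0 else 1) with hD'
    have hsym' : ∀ a b, D' a b = D' b a := by
      intro a b
      simp only [hD', hD, dist_comm (p a) (p b)]
      congr 2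
      by_cases h : a = b <;> simp [h, eq_comm]
    have hdiag' : ∀ a, D' a a = 0 := by
      intro a; simp [hD', hD]
    have hneg' : ∀ w : ι → ℝ, ∑ a, w a = 0 → 0 ≤ -∑ a, ∑ b, w a * w b * D' a b := by
      intro w hw
      have hqf := sum_zero_quadform p w hw
      have hite : ∑ a, ∑ b, w a * w b * (if a = b then 0 else 1)
          = - ∑ a, (w a)^2 := by
        have h1 : ∀ a : ι, ∑ b, w a * w b * (if a = b then 0 else 1)
            = w a * (∑ b, w b) - (w a)^2 := by
          intro a
          have h2 : ∀ b : ι, w a * w b * (if a = b then 0 else 1)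
              = w a * w b - (if b = a then w a * w b else 0) := by
            intro b
            by_cases h : a = b
            · subst h; simp
            · simp [h, Ne.symm h]
          simp only [h2, Finset.sum_sub_distrib, Finset.sum_ite_eq', Finset.mem_univ,
            if_true, ← Finset.mul_sum]
          ring
        simp only [h1, Finset.sum_sub_distrib, ← Finset.sum_mul, hw]
        ring
      have hsplit : ∑ a, ∑ b, w a * w b * D' a b
          = (∑ a, ∑ b, w a * w b * D a b)
            - lam * ∑ a, ∑ b, w a * w b * (if a = b then 0 else 1) := by
        simp only [hD', mul_sub, Finset.sum_sub_distrib, Finset.mul_sum]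
        congr 1
        refine Finset.sum_congr rfl fun a _ => Finset.sum_congr rfl fun b _ => by ring
      have hDq : ∑ a, ∑ b, w a * w b * D a b = -2 * ‖∑ a, w a • p a‖^2 := hqf
      rw [hsplit, hDq, hite]
      have hcow := hco w hw
      nlinarith [Finset.sum_nonneg (fun a (_ : a ∈ Finset.univ) => sq_nonneg (w a))]
    obtain ⟨q, hq⟩ := exists_sq_decomp D' hsym' hdiag' hneg'
    set B : ℝ := 1 + 2 * ∑ a, ∑ c, |q a c| with hBdef
    have hB1 : 1 ≤ B := by
      have : 0 ≤ ∑ a, ∑ c, |q a c| :=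
        Finset.sum_nonneg fun _ _ => Finset.sum_nonneg fun _ _ => abs_nonneg _
      simp only [hBdef]; linarith
    have hqB : ∀ a b c, |q a c - q b c| ≤ B := by
      have hterm : ∀ a c, |q a c| ≤ ∑ a', ∑ c', |q a' c'| := by
        intro a c
        calc |q a c| ≤ ∑ c', |q a c'| :=
              Finset.single_le_sum (f := fun c' => |q a c'|)
                (fun _ _ => abs_nonneg _) (Finset.mem_univ c)
          _ ≤ ∑ a', ∑ c', |q a' c'| :=
              Finset.single_le_sum (f := fun a' => ∑ c', |q a' c'|)
                (fun _ _ => Finset.sum_nonneg fun _ _ => abs_nonneg _) (Finset.mem_univ a)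
      intro a b c
      calc |q a c - q b c| ≤ |q a c| + |q b c| := abs_sub _ _
        _ ≤ B := by
            have := hterm a c
            have := hterm b c
            simp only [hBdef]
            linarith
    -- choose M
    obtain ⟨M, hMge⟩ := exists_nat_ge (max 1 (24*(N:ℝ)^2*B/lam))
    have hM1 : 1 ≤ M := by
      have h := le_trans (le_max_left 1 (24*(N:ℝ)^2*B/lam)) hMge
      exact_mod_cast h
    have hMR1 : (1:ℝ) ≤ M := by exact_mod_cast hM1
    have hMbig : 24*(N:ℝ)^2*B/lam ≤ M := le_trans (le_max_right _ _) hMge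
    -- choose m
    obtain ⟨m, hmge⟩ := exists_nat_ge
      (max (8*Real.pi*M*B) (max 2 (1024*Real.pi^2*(M:ℝ)^2*B^4*(N:ℝ)^2/lam)))
    have hm2 : 2 ≤ m := by
      have h := le_trans (le_trans (le_max_left 2 _) (le_max_right (8*Real.pi*M*B) _)) hmge
      exact_mod_cast h
    have hmpos : 0 < m := by omega
    have hm8 : 8*Real.pi*(M:ℝ)*B ≤ m := le_trans (le_max_left _ _) hmge
    have hmbig : 1024*Real.pi^2*(M:ℝ)^2*B^4*(N:ℝ)^2/lam ≤ m :=
      le_trans (le_trans (le_max_right 2 _) (le_max_right (8*Real.pi*M*B) _)) hmge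
    -- integer positions
    set z : ι → ι → ℤ := fun a c => round ((M:ℝ) * q a c) with hz
    set ε : ℝ := lam/(2*N) with hε
    have hεpos : 0 < ε := by positivity
    -- the polygonal (cosine) part
    set s : ℝ := (m:ℝ)^2/(2*Real.pi^2*(M:ℝ)^2) with hs
    set S : ι → ι → ℝ := fun a b =>
      D a b - ∑ c, s * (1 - Real.cos (2*Real.pi*((z a c - z b c : ℤ) : ℝ)/m)) with hS
    have hSsym : ∀ a b, S a b = S b a := by
      intro a b
      simp only [hS, hD, dist_comm (p a) (p b)]
      congr 1
      refine Finset.sum_congr rfl fun c _ => ?_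
      have hcc : Real.cos (2*Real.pi*((z a c - z b c : ℤ) : ℝ)/m)
          = Real.cos (2*Real.pi*((z b c - z a c : ℤ) : ℝ)/m) := by
        rw [show (2*Real.pi*((z a c - z b c : ℤ) : ℝ)/m)
            = -(2*Real.pi*((z b c - z a c : ℤ) : ℝ)/m) by push_cast; ring, Real.cos_neg]
      rw [hcc]
    have hSdiag : ∀ a, S a a = 0 := by
      intro a
      simp [hS, hD]
    have hSnear : ∀ a b, a ≠ b → |S a b - lam| ≤ ε/2 := by
      intro a b hab
      have hD'ab : D' a b = D a b - lam := by
        simp [hD', hab]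
      have hrw : S a b - lam
          = ∑ c, ((q a c - q b c)^2
              - s * (1 - Real.cos (2*Real.pi*((z a c - z b c : ℤ) : ℝ)/m))) := by
        rw [Finset.sum_sub_distrib, hq a b, hD'ab]
        simp only [hS]
        ring
      rw [hrw]
      set δ : ℝ := 3*B/M + 128*Real.pi^2*(M:ℝ)^2*B^4/(m:ℝ)^2 with hδ
      have hper : ∀ c : ι, |(q a c - q b c)^2
          - s * (1 - Real.cos (2*Real.pi*((z a c - z b c : ℤ) : ℝ)/m))| ≤ δ := by
        intro c
        have hΔu : |((z a c - z b c : ℤ) : ℝ) - (M:ℝ) * (q a c - q b c)| ≤ 1 := by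
          have h1 := abs_sub_round ((M:ℝ) * q a c)
          have h2 := abs_sub_round ((M:ℝ) * q b c)
          have hrw2 : ((z a c - z b c : ℤ) : ℝ) - (M:ℝ) * (q a c - q b c)
              = -(((M:ℝ) * q a c) - (round ((M:ℝ) * q a c) : ℤ))
                + (((M:ℝ) * q b c) - (round ((M:ℝ) * q b c) : ℤ)) := by
            simp only [hz]
            push_cast
            ring
          rw [hrw2]
          calc |_ + _| ≤ |-(((M:ℝ) * q a c) - (round ((M:ℝ) * q a c) : ℤ))|
                + |(((M:ℝ) * q b c) - (round ((M:ℝ) * q b c) : ℤ))| := abs_add_le _ _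
            _ ≤ 1 := by rw [abs_neg]; linarith
        have := polygon_sq_approx M m hM1 (z a c - z b c) (q a c - q b c) B hB1
          hΔu (hqB a b c) hm8
        rw [abs_sub_comm]
        simpa [hs, hδ] using this
      calc |∑ c, ((q a c - q b c)^2
              - s * (1 - Real.cos (2*Real.pi*((z a c - z b c : ℤ) : ℝ)/m)))|
          ≤ ∑ c, |(q a c - q b c)^2
              - s * (1 - Real.cos (2*Real.pi*((z a c - z b c : ℤ) : ℝ)/m))| :=
            Finset.abs_sum_le_sum_abs _ _
        _ ≤ ∑ _c : ι, δ := Finset.sum_le_sum fun c _ => hper c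
        _ = N * δ := by simp [hNdef, mul_comm]
        _ ≤ ε/2 := by
            have hMlam : 24*(N:ℝ)^2*B ≤ (M:ℝ) * lam := by
              rw [div_le_iff₀ hlam] at hMbig
              linarith
            have hmlam : 1024*Real.pi^2*(M:ℝ)^2*B^4*(N:ℝ)^2 ≤ lam * m := by
              rw [div_le_iff₀ hlam] at hmbig
              linarith
            have hm1R : (1:ℝ) ≤ m := by
              have : (2:ℝ) ≤ m := by exact_mod_cast hm2
              linarith
            have hmsq : lam * m ≤ lam * (m:ℝ)^2 := by
              have h9 : (m:ℝ) ≤ (m:ℝ)^2 := by nlinarith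
              exact mul_le_mul_of_nonneg_left h9 hlam.le
            have hMpos : (0:ℝ) < M := by linarith
            have hmRpos : (0:ℝ) < m := by linarith
            have e1 : (N:ℝ) * (3*B/M) ≤ lam/(4*(2*N)) := by
              rw [show (N:ℝ) * (3*B/M) = (3*B*N)/M by ring,
                div_le_div_iff₀ hMpos (by positivity)]
              nlinarith
            have e2 : (N:ℝ) * (128*Real.pi^2*(M:ℝ)^2*B^4/(m:ℝ)^2) ≤ lam/(4*(2*N)) := by
              rw [show (N:ℝ) * (128*Real.pi^2*(M:ℝ)^2*B^4/(m:ℝ)^2)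
                  = (128*Real.pi^2*(M:ℝ)^2*B^4*N)/(m:ℝ)^2 by ring,
                div_le_div_iff₀ (by positivity) (by positivity)]
              nlinarith
            have : (N:ℝ) * δ = (N:ℝ) * (3*B/M) + (N:ℝ) * (128*Real.pi^2*(M:ℝ)^2*B^4/(m:ℝ)^2) := by
              rw [hδ]; ring
            rw [this, hε]
            have : lam/(2*N)/2 = lam/(4*(2*N)) + lam/(4*(2*N)) := by
              field_simp
              ring
            rw [this]
            linarith
    -- cut data
    set C : ℝ := lam + ε with hC
    set R : ι → ℝ := fun u => ∑ k ∈ Finset.univ.erase u, S u k with hR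
    set A : ι → ℝ := fun u => (R u - ((N:ℝ) - 2)*C)/2 with hA
    set bb : ι → ι → ℝ := fun u v => (C - S u v)/4 with hbb
    have hcardE : ∀ u : ι, (Finset.univ.erase u).card = N - 1 := by
      intro u
      rw [Finset.card_erase_of_mem (Finset.mem_univ u), Finset.card_univ]
    have hApos : ∀ u, 0 < A u := by
      intro u
      have hRlow : ((N:ℝ) - 1) * (lam - ε/2) ≤ R u := by
        have hcard : ((Finset.univ.erase u).card : ℝ) = (N:ℝ) - 1 := by
          rw [hcardE u]
          have : (1:ℕ) ≤ N := by omega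
          push_cast [Nat.cast_sub this]
          ring
        have hterm : ∀ k ∈ Finset.univ.erase u, lam - ε/2 ≤ S u k := by
          intro k hk
          have hne : u ≠ k := (Finset.ne_of_mem_erase hk).symm
          have := hSnear u k hne
          have := abs_le.mp this
          linarith [this.1]
        calc ((N:ℝ) - 1) * (lam - ε/2)
            = ((Finset.univ.erase u).card : ℝ) * (lam - ε/2) := by rw [hcard]
          _ ≤ R u := by
              have h := Finset.card_nsmul_le_sum (Finset.univ.erase u) (S u) (lam - ε/2)
                hterm
              rw [nsmul_eq_mul] at h
              exact h
      have hεN : ε * (2*(N:ℝ)) = lam := by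
        rw [hε]; field_simp
      have : 0 < ((N:ℝ) - 1) * (lam - ε/2) - ((N:ℝ) - 2)*C := by
        rw [hC]
        nlinarith [hεN, hNR, hlam, hεpos]
      simp only [hA]
      linarith
    have hbbpos : ∀ u v, u ≠ v → 0 < bb u v := by
      intro u v huv
      have := abs_le.mp (hSnear u v huv)
      simp only [hbb, hC]
      linarith [this.2]
    -- the index type
    set κ := (ι ⊕ (ι ⊕ ι × ι)) with hκ
    set mK : κ → ℕ := fun i => Sum.rec (fun _ => m) (fun _ => 2) i with hmK
    set rK : κ → ℝ := fun i =>
      Sum.rec (fun _ => (m:ℝ)/(2*Real.pi*M))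
        (fun j => Sum.rec (fun u => Real.sqrt (A u)/2)
          (fun uv => if uv.1 = uv.2 then 1 else Real.sqrt (bb uv.1 uv.2)/2) j) i with hrK
    set xK : κ → ι → ℕ := fun i =>
      Sum.rec (fun c => fun a => ((z a c) % (m:ℤ)).toNat)
        (fun j => Sum.rec (fun u => fun a => if a = u then 1 else 0)
          (fun uv => fun a =>
            if uv.1 = uv.2 then 0 else (if a = uv.1 ∨ a = uv.2 then 1 else 0)) j) i with hxK
    set F : κ → ι → ι → ℝ := fun i a b =>
      2 * (rK i)^2
        * (1 - Real.cos (2*Real.pi*(xK i a)/(mK i) - 2*Real.pi*(xK i b)/(mK i))) with hF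
    have hbbsym : ∀ u v, bb u v = bb v u := by
      intro u v; simp only [hbb, hSsym u v]
    have main : ∀ a b, D a b = ∑ i : κ, F i a b := by
      intro a b
      rcases eq_or_ne a b with rfl | hab
      · have h0 : ∀ i : κ, F i a a = 0 := by
          intro i; simp [hF]
        simp [h0, hD]
      · -- finset of the two special points
        set t : Finset ι := Finset.univ \ {a, b} with ht
        have hbt : b ∉ t := by simp [ht]
        have hat : a ∉ t := by simp [ht]
        have hcardt : (t.card : ℝ) = (N:ℝ) - 2 := by
          have h1 : t.card = N - 2 := by
            rw [ht, Finset.card_sdiff_of_subset (Finset.subset_univ _), Finset.card_univ]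
            congr 1
            rw [Finset.card_insert_of_notMem (by simp [hab]), Finset.card_singleton]
          rw [h1]
          push_cast [Nat.cast_sub hN2]
          ring
        have herasea : Finset.univ.erase a = insert b t := by
          ext v
          simp only [Finset.mem_erase, Finset.mem_univ, and_true, Finset.mem_insert, ht,
            Finset.mem_sdiff, Finset.mem_singleton, true_and]
          by_cases hvb : v = b
          · simp [hvb, hab.symm]
          · simp [hvb]
        have heraseb : Finset.univ.erase b = insert a t := by
          ext v
          simp only [Finset.mem_erase, Finset.mem_univ, and_true, Finset.mem_insert, ht,
            Finset.mem_sdiff, Finset.mem_singleton, true_and]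
          by_cases hva : v = a
          · simp [hva, hab]
          · simp [hva]
        have hRa : R a = S a b + ∑ v ∈ t, S a v := by
          rw [hR]
          simp only
          rw [herasea, Finset.sum_insert hbt]
        have hRb : R b = S a b + ∑ v ∈ t, S b v := by
          rw [hR]
          simp only
          rw [heraseb, Finset.sum_insert hat, hSsym b a]
        -- Part 1 : cosine polygons
        have hFc : ∀ c : ι, F (Sum.inl c) a b
            = s * (1 - Real.cos (2*Real.pi*((z a c - z b c : ℤ) : ℝ)/m)) := by
          intro c
          have h1 : F (Sum.inl c) a b
              = 2 * ((m:ℝ)/(2*Real.pi*M))^2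
                * (1 - Real.cos (2*Real.pi*((((z a c) % (m:ℤ)).toNat : ℕ) : ℝ)/m
                    - 2*Real.pi*((((z b c) % (m:ℤ)).toNat : ℕ) : ℝ)/m)) := rfl
          rw [h1, cos_mod_arg (z a c) (z b c) m hmpos]
          have h2 : 2 * ((m:ℝ)/(2*Real.pi*M))^2 = s := by
            rw [hs]
            have : Real.pi ≠ 0 := by positivity
            field_simp
          rw [h2]
        have part1 : ∑ c : ι, F (Sum.inl c) a b = D a b - S a b := by
          rw [Finset.sum_congr rfl fun c _ => hFc c]
          simp only [hS]
          ring
        -- Part 2 : singleton cuts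
        have hsqA : ∀ u, 4*(Real.sqrt (A u)/2)^2 = A u := by
          intro u
          rw [div_pow, Real.sq_sqrt (hApos u).le]
          ring
        have hF2 : ∀ u : ι, F (Sum.inr (Sum.inl u)) a b
            = (if u = a then A a else 0) + (if u = b then A b else 0) := by
          intro u
          have h1 : F (Sum.inr (Sum.inl u)) a b
              = 2*(Real.sqrt (A u)/2)^2
                * (1 - Real.cos (2*Real.pi*((if a = u then 1 else 0 : ℕ) : ℝ)/2
                    - 2*Real.pi*((if b = u then 1 else 0 : ℕ) : ℝ)/2)) := rfl
          rw [h1, two_gon_val (Real.sqrt (A u)/2) _ _ (by split <;> norm_num)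
            (by split <;> norm_num)]
          rcases eq_or_ne u a with rfl | hua
          · have hc : ¬ ((if u = u then 1 else 0 : ℕ) = (if b = u then 1 else 0)) := by
              simp [Ne.symm hab]
            rw [if_neg hc, if_pos rfl, if_neg hab, add_zero, hsqA u]
          · rcases eq_or_ne u b with rfl | hub
            · have hc : ¬ ((if a = u then 1 else 0 : ℕ) = (if u = u then 1 else 0)) := by
                simp [hab]
              rw [if_neg hc, if_neg hua, if_pos rfl, zero_add, hsqA u]
            · rw [if_pos (by simp [Ne.symm hua, Ne.symm hub]), if_neg hua, if_neg hub,
                add_zero]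
        have part2 : ∑ u : ι, F (Sum.inr (Sum.inl u)) a b = A a + A b := by
          rw [Finset.sum_congr rfl fun u _ => hF2 u, Finset.sum_add_distrib,
            Finset.sum_ite_eq', Finset.sum_ite_eq']
          simp
        -- Part 3 : pair cuts
        have hsqbb : ∀ u v, u ≠ v → 4*(Real.sqrt (bb u v)/2)^2 = bb u v := by
          intro u v huv
          rw [div_pow, Real.sq_sqrt (hbbpos u v huv).le]
          ring
        have hF3 : ∀ u v : ι, F (Sum.inr (Sum.inr (u, v))) a b
            = if u = v then 0
              else (if ((a = u ∨ a = v) ↔ (b = u ∨ b = v)) then 0 else bb u v) := by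
          intro u v
          rcases eq_or_ne u v with rfl | huv
          · rw [if_pos rfl]
            simp [hF, hrK, hxK, hmK]
          · have h1 : F (Sum.inr (Sum.inr (u, v))) a b
                = 2*(Real.sqrt (bb u v)/2)^2
                  * (1 - Real.cos (2*Real.pi*((if a = u ∨ a = v then 1 else 0 : ℕ) : ℝ)/2
                      - 2*Real.pi*((if b = u ∨ b = v then 1 else 0 : ℕ) : ℝ)/2)) := by
              simp only [hF, hrK, hxK, hmK, if_neg huv, Nat.cast_ofNat]
            rw [h1, two_gon_val (Real.sqrt (bb u v)/2) _ _ (by split <;> norm_num)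
              (by split <;> norm_num), if_neg huv]
            by_cases hiff : ((a = u ∨ a = v) ↔ (b = u ∨ b = v))
            · rw [if_pos hiff]
              by_cases hP : (a = u ∨ a = v)
              · rw [if_pos hP, if_pos (hiff.mp hP), if_pos rfl]
              · rw [if_neg hP, if_neg (fun h => hP (hiff.mpr h)), if_pos rfl]
            · rw [if_neg hiff]
              have hne : (if a = u ∨ a = v then 1 else 0 : ℕ)
                  ≠ (if b = u ∨ b = v then 1 else 0 : ℕ) := by
                by_cases hP : (a = u ∨ a = v) <;> by_cases hQ : (b = u ∨ b = v) <;>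
                  simp [hP, hQ] <;> tauto
              rw [if_neg hne, hsqbb u v huv]
        have hrow : ∀ u : ι, (∑ v : ι, F (Sum.inr (Sum.inr (u, v))) a b)
            = (if u = a then ∑ v ∈ t, bb u v else 0)
              + (if u = b then ∑ v ∈ t, bb u v else 0)
              + (if u ∈ t then bb u a + bb u b else 0) := by
          intro u
          rw [Finset.sum_congr rfl fun v _ => hF3 u v]
          have hmem : ∀ v : ι, v ∈ t ↔ (v ≠ a ∧ v ≠ b) := by
            intro v
            simp [ht]
          by_cases hua : u = a
          · rw [if_pos hua, if_neg (by rw [hua]; exact hab), if_neg (by rw [hua]; exact hat),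
              add_zero, add_zero]
            have hpt : ∀ v : ι, (if u = v then 0
                else (if ((a = u ∨ a = v) ↔ (b = u ∨ b = v)) then 0 else bb u v))
                = if v ∈ t then bb u v else 0 := by
              intro v
              by_cases hvt : v ∈ t
              · obtain ⟨hva, hvb⟩ := (hmem v).mp hvt
                have huv : u ≠ v := by rw [hua]; exact fun h => hva h.symm
                have hiff : ¬ ((a = u ∨ a = v) ↔ (b = u ∨ b = v)) := by
                  intro hiff
                  rcases hiff.mp (Or.inl hua.symm) with h3 | h3
                  · exact hab ((hua.symm).trans h3.symm)
                  · exact hvb h3.symm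
                rw [if_neg huv, if_neg hiff, if_pos hvt]
              · rw [if_neg hvt]
                have hvab : v = a ∨ v = b := by
                  by_contra hcon
                  push_neg at hcon
                  exact hvt ((hmem v).mpr hcon)
                rcases hvab with hv | hv
                · rw [if_pos (by rw [hua, hv])]
                · rw [if_neg (by rw [hua, hv]; exact hab),
                    if_pos (iff_of_true (Or.inl hua.symm) (Or.inr hv.symm))]
            rw [Finset.sum_congr rfl fun v _ => hpt v, Finset.sum_ite_mem,
              Finset.univ_inter]
          · by_cases hub : u = b
            · rw [if_neg hua, if_pos hub, if_neg (by rw [hub]; exact hbt),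
              zero_add, add_zero]
              have hpt : ∀ v : ι, (if u = v then 0
                  else (if ((a = u ∨ a = v) ↔ (b = u ∨ b = v)) then 0 else bb u v))
                  = if v ∈ t then bb u v else 0 := by
                intro v
                by_cases hvt : v ∈ t
                · obtain ⟨hva, hvb⟩ := (hmem v).mp hvt
                  have huv : u ≠ v := by rw [hub]; exact fun h => hvb h.symm
                  have hiff : ¬ ((a = u ∨ a = v) ↔ (b = u ∨ b = v)) := by
                    intro hiff
                    rcases hiff.mpr (Or.inl hub.symm) with h3 | h3
                    · exact hab (h3.trans hub)
                    · exact hva h3.symm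
                  rw [if_neg huv, if_neg hiff, if_pos hvt]
                · rw [if_neg hvt]
                  have hvab : v = a ∨ v = b := by
                    by_contra hcon
                    push_neg at hcon
                    exact hvt ((hmem v).mpr hcon)
                  rcases hvab with hv | hv
                  · rw [if_neg (by rw [hub, hv]; exact Ne.symm hab),
                      if_pos (iff_of_true (Or.inr hv.symm) (Or.inl hub.symm))]
                  · rw [if_pos (by rw [hub, hv])]
              rw [Finset.sum_congr rfl fun v _ => hpt v, Finset.sum_ite_mem,
                Finset.univ_inter]
            · have hut : u ∈ t := (hmem u).mpr ⟨hua, hub⟩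
              rw [if_neg hua, if_neg hub, if_pos hut, zero_add, zero_add]
              have hpt : ∀ v : ι, (if u = v then 0
                  else (if ((a = u ∨ a = v) ↔ (b = u ∨ b = v)) then 0 else bb u v))
                  = (if v = a then bb u v else 0) + (if v = b then bb u v else 0) := by
                intro v
                by_cases hva : v = a
                · have huv : u ≠ v := fun h => hua (h.trans hva)
                  have hiff : ¬ ((a = u ∨ a = v) ↔ (b = u ∨ b = v)) := by
                    intro hiff
                    rcases hiff.mp (Or.inr hva.symm) with h3 | h3
                    · exact hub h3.symm
                    · exact hab ((hva.symm.trans h3.symm).symm ▸ rfl)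
                  rw [if_neg huv, if_neg hiff, if_pos hva,
                    if_neg (fun h => hab ((hva.symm.trans h) ▸ rfl))]
                  ring
                · by_cases hvb : v = b
                  · have huv : u ≠ v := fun h => hub (h.trans hvb)
                    have hiff : ¬ ((a = u ∨ a = v) ↔ (b = u ∨ b = v)) := by
                      intro hiff
                      rcases hiff.mpr (Or.inr hvb.symm) with h3 | h3
                      · exact hua h3.symm
                      · exact hab (h3.trans hvb)
                    rw [if_neg huv, if_neg hiff, if_neg hva, if_pos hvb]
                    ring
                  · rw [if_neg hva, if_neg hvb, add_zero]
                    by_cases huv : u = v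
                    · rw [if_pos huv]
                    · have hiff : ((a = u ∨ a = v) ↔ (b = u ∨ b = v)) := by
                        constructor
                        · intro h3
                          rcases h3 with h3 | h3
                          · exact absurd h3.symm hua
                          · exact absurd h3.symm hva
                        · intro h3
                          rcases h3 with h3 | h3
                          · exact absurd h3.symm hub
                          · exact absurd h3.symm hvb
                      rw [if_neg huv, if_pos hiff]
              rw [Finset.sum_congr rfl fun v _ => hpt v, Finset.sum_add_distrib,
                Finset.sum_ite_eq', Finset.sum_ite_eq']
              simp
        have part3 : ∑ uv : ι × ι, F (Sum.inr (Sum.inr uv)) a b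
            = (∑ v ∈ t, bb a v) + (∑ v ∈ t, bb b v) + ∑ u ∈ t, (bb u a + bb u b) := by
          rw [Fintype.sum_prod_type, Finset.sum_congr rfl fun u _ => hrow u,
            Finset.sum_add_distrib, Finset.sum_add_distrib,
            Finset.sum_ite_eq', Finset.sum_ite_eq', Finset.sum_ite_mem, Finset.univ_inter]
          simp
        have hsum : ∑ i : κ, F i a b
            = (∑ c : ι, F (Sum.inl c) a b) + ((∑ u : ι, F (Sum.inr (Sum.inl u)) a b)
              + ∑ uv : ι × ι, F (Sum.inr (Sum.inr uv)) a b) := by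
          rw [Fintype.sum_sum_type]
          congr 1
          rw [Fintype.sum_sum_type]
        rw [hsum, part1, part2, part3]
        have hsubst : ∑ u ∈ t, (bb u a + bb u b) = (∑ v ∈ t, bb a v) + (∑ v ∈ t, bb b v) := by
          rw [Finset.sum_add_distrib]
          congr 1
          · exact Finset.sum_congr rfl fun u _ => hbbsym u a
          · exact Finset.sum_congr rfl fun u _ => hbbsym u b
        rw [hsubst]
        have hbbsum : ∀ w : ι, ∑ v ∈ t, bb w v = (((N:ℝ)-2)*C - ∑ v ∈ t, S w v)/4 := by
          intro w
          have h1 : ∀ v : ι, bb w v = (C - S w v)/4 := fun v => rfl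
          rw [Finset.sum_congr rfl fun v _ => h1 v, ← Finset.sum_div,
            Finset.sum_sub_distrib, Finset.sum_const, nsmul_eq_mul, hcardt]
        rw [hbbsum a, hbbsum b]
        have hAa : A a = (S a b + ∑ v ∈ t, S a v - ((N:ℝ)-2)*C)/2 := by
          have h1 : A a = (R a - ((N:ℝ) - 2)*C)/2 := rfl
          rw [h1, hRa]
        have hAb : A b = (S a b + ∑ v ∈ t, S b v - ((N:ℝ)-2)*C)/2 := by
          have h1 : A b = (R b - ((N:ℝ) - 2)*C)/2 := rfl
          rw [h1, hRb]
        rw [hAa, hAb]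
        ring
    -- transport to Fin n
    set n : ℕ := Fintype.card κ with hn
    set eκ : Fin n ≃ κ := (Fintype.equivFin κ).symm with heκ
    refine ⟨n, fun i => mK (eκ i), fun i => rK (eκ i), fun i => xK (eκ i),
      fun i => ?_, fun i => ?_, fun i a => ?_, fun a b => ?_⟩
    · show 2 ≤ mK (eκ i)
      rcases heq : eκ i with c | u | uv
      · exact hm2
      · exact le_refl 2
      · exact le_refl 2
    · show 0 < rK (eκ i)
      rcases heq : eκ i with c | u | uv
      · have hmRpos : (0:ℝ) < m := by positivity
        show (0:ℝ) < (m:ℝ)/(2*Real.pi*M)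
        positivity
      · show (0:ℝ) < Real.sqrt (A u)/2
        have := hApos u
        positivity
      · show (0:ℝ) < if uv.1 = uv.2 then 1 else Real.sqrt (bb uv.1 uv.2)/2
        by_cases h : uv.1 = uv.2
        · rw [if_pos h]; norm_num
        · rw [if_neg h]
          have := hbbpos uv.1 uv.2 h
          positivity
    · show xK (eκ i) a < mK (eκ i)
      rcases heq : eκ i with c | u | uv
      · show ((z a c) % (m:ℤ)).toNat < m
        have h1 : z a c % (m:ℤ) < m := Int.emod_lt_of_pos _ (by exact_mod_cast hmpos)
        have h2 : 0 ≤ z a c % (m:ℤ) := Int.emod_nonneg _ (by exact_mod_cast hmpos.ne')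
        omega
      · show (if a = u then 1 else 0) < 2
        split <;> norm_num
      · show (if uv.1 = uv.2 then 0 else if a = uv.1 ∨ a = uv.2 then 1 else 0) < 2
        split
        · norm_num
        · split <;> norm_num
    · have h1 := main a b
      have h2 : ∑ i : Fin n, F (eκ i) a b = ∑ j : κ, F j a b :=
        Equiv.sum_comp eκ (fun j => F j a b)
      show D a b = _
      rw [h1, ← h2]

lemma polygonVertex_dist_sq (r θ : ℝ) (mm j k : ℕ) (c : EuclideanSpace ℝ (Fin 2)) :
    ∑ l : Fin 2, dist (polygonVertex c r θ mm j l) (polygonVertex c r θ mm k l)^2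
      = 2*r^2*(1 - Real.cos (2*Real.pi*j/mm - 2*Real.pi*k/mm)) := by
  have h0 : ∀ jj : ℕ, polygonVertex c r θ mm jj 0
      = c 0 + r * Real.cos (2*Real.pi*jj/mm + θ) := fun jj => rfl
  have h1 : ∀ jj : ℕ, polygonVertex c r θ mm jj 1
      = c 1 + r * Real.sin (2*Real.pi*jj/mm + θ) := fun jj => rfl
  rw [Fin.sum_univ_two, h0 j, h0 k, h1 j, h1 k, Real.dist_eq, Real.dist_eq,
    sq_abs, sq_abs]
  calc (c 0 + r * Real.cos (2*Real.pi*j/mm + θ) - (c 0 + r * Real.cos (2*Real.pi*k/mm + θ)))^2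
        + (c 1 + r * Real.sin (2*Real.pi*j/mm + θ) - (c 1 + r * Real.sin (2*Real.pi*k/mm + θ)))^2
      = (r*Real.cos (2*Real.pi*j/mm + θ) - r*Real.cos (2*Real.pi*k/mm + θ))^2
        + (r*Real.sin (2*Real.pi*j/mm + θ) - r*Real.sin (2*Real.pi*k/mm + θ))^2 := by ring
    _ = 2*r^2*(1 - Real.cos ((2*Real.pi*j/mm + θ) - (2*Real.pi*k/mm + θ))) := plane_sq _ _ _
    _ = 2*r^2*(1 - Real.cos (2*Real.pi*j/mm - 2*Real.pi*k/mm)) := by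
        rw [show (2*Real.pi*(j:ℝ)/mm + θ) - (2*Real.pi*(k:ℝ)/mm + θ)
            = 2*Real.pi*(j:ℝ)/mm - 2*Real.pi*(k:ℝ)/mm by ring]

/-- Every simplex (finite affinely independent set in `ℝ^d`) embeds isometrically
into a regular polygonal torus. -/
theorem simplex_embeds_into_regular_polygonal_torus
    (d : ℕ) (Y : Set (EuclideanSpace ℝ (Fin d))) (hYfin : Y.Finite)
    (hYind : AffineIndependent ℝ ((↑) : Y → EuclideanSpace ℝ (Fin d))) :
    ∃ (n : ℕ) (T : Fin n → Set (EuclideanSpace ℝ (Fin 2))),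
      (∀ i, ∃ m r, IsRegularPolygon m r (T i)) ∧
      ∃ f : Y → EuclideanSpace ℝ (Fin n × Fin 2),
        (∀ y, f y ∈ toriProduct T) ∧
        ∀ y y' : Y, dist (f y) (f y') = dist (y : EuclideanSpace ℝ (Fin d)) y' := by
  classical
  haveI : Fintype Y := hYfin.fintype
  set P : Y → EuclideanSpace ℝ (Fin d) := fun y => (y : EuclideanSpace ℝ (Fin d)) with hP
  have hp : ∀ w : Y → ℝ, ∑ a, w a = 0 → ∑ a, w a • P a = 0 → w = 0 := by
    intro w hw hsum
    have h := (affineIndependent_iff_of_fintype (k := ℝ) P).mp hYind w hw ?_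
    · funext a; exact h a
    · rw [Finset.weightedVSub_eq_linear_combination _ hw]
      exact hsum
  obtain ⟨n, m, r, x, hm, hr, hx, hiden⟩ := key P hp
  set f : Y → EuclideanSpace ℝ (Fin n × Fin 2) := fun y =>
    (WithLp.equiv 2 ((Fin n × Fin 2) → ℝ)).symm
      (fun ij => polygonVertex 0 (r ij.1) 0 (m ij.1) (x ij.1 y) ij.2) with hf
  refine ⟨n, fun i => {pt | ∃ j < m i, pt = polygonVertex 0 (r i) 0 (m i) j},
    fun i => ⟨m i, r i, hm i, hr i, 0, 0, rfl⟩, f, ?_, ?_⟩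
  · intro y i
    exact ⟨x i y, hx i y, rfl⟩
  · intro y y'
    have hcomp : ∀ (yy : Y) (i : Fin n) (j : Fin 2),
        f yy (i, j) = polygonVertex 0 (r i) 0 (m i) (x i yy) j := fun yy i j => rfl
    have hsum0 : ∀ (ij : Fin n × Fin 2), (0:ℝ) ≤ dist (f y ij) (f y' ij)^2 :=
      fun ij => sq_nonneg _
    have hd2 : dist (f y) (f y')^2 = dist (P y) (P y')^2 := by
      rw [EuclideanSpace.dist_eq, Real.sq_sqrt (Finset.sum_nonneg fun ij _ => hsum0 ij)]
      rw [Fintype.sum_prod_type]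
      have hinner : ∀ i : Fin n, ∑ j : Fin 2, dist (f y (i,j)) (f y' (i,j))^2
          = 2*(r i)^2*(1 - Real.cos (2*Real.pi*(x i y)/(m i) - 2*Real.pi*(x i y')/(m i))) := by
        intro i
        have : ∀ j : Fin 2, dist (f y (i,j)) (f y' (i,j))^2
            = dist (polygonVertex 0 (r i) 0 (m i) (x i y) j)
                (polygonVertex 0 (r i) 0 (m i) (x i y') j)^2 := by
          intro j
          rw [hcomp y i j, hcomp y' i j]
        rw [Finset.sum_congr rfl fun j _ => this j]
        -- two polygonVertex with different j: use plane geometry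
        have h0 : ∀ jj : ℕ, polygonVertex 0 (r i) 0 (m i) jj 0
            = (0 : EuclideanSpace ℝ (Fin 2)) 0 + r i * Real.cos (2*Real.pi*jj/(m i) + 0) :=
          fun jj => rfl
        have hds := polygonVertex_dist_sq (r i) 0 (m i) (x i y) (x i y')
          (0 : EuclideanSpace ℝ (Fin 2))
        exact hds
      rw [Finset.sum_congr rfl fun i _ => hinner i]
      exact (hiden y y').symm
    have h1 : dist (f y) (f y') = Real.sqrt (dist (P y) (P y')^2) := by
      rw [← hd2, Real.sqrt_sq dist_nonneg]
    rw [h1, Real.sqrt_sq dist_nonneg]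

end
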